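/- Let τ_i, τ_j be nonempty subsets of [m] with τ_i ∪ τ_j = [m]. Then the interiors of |star_{∂Δ^{m-1}}(τ_i)| and |star_{∂Δ^{m-1}}(τ_j)| are disjoint. -/

import Mathlib

open Classical
noncomputable section

/-- The support of a point of the standard simplex, as a finset. -/
def supp {m : ℕ} (x : Fin m → ℝ) : Finset (Fin m) :=
  Finset.univ.filter (fun i => x i ≠ 0)

/-- The geometric realization `|∂Δ^{m-1}|` of the boundary of the simplex on `[m]`. -/
def bdSimplex (m : ℕ) : Set (Fin m → ℝ) :=
  {x | x ∈ stdSimplex ℝ (Fin m) ∧ supp x ≠ Finset.univ}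

/-- The geometric realization of a collection `L` of faces, inside `|∂Δ^{m-1}|`. -/
def realize {m : ℕ} (L : Set (Finset (Fin m))) : Set (bdSimplex m) :=
  {x | ∃ σ ∈ L, supp x.1 ⊆ σ}

/-- The star of `τ` in `∂Δ^{m-1}`: faces `σ` with `σ ∪ τ ∈ ∂Δ^{m-1}`. -/
def starC {m : ℕ} (τ : Finset (Fin m)) : Set (Finset (Fin m)) :=
  {σ | σ ∪ τ ≠ Finset.univ}

/-- `U_τ`: the interior, taken in `|∂Δ^{m-1}|`, of the realized star of `τ`. -/
def Ustar {m : ℕ} (τ : Finset (Fin m)) : Set (bdSimplex m) :=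
  interior (realize (starC τ))

/-- The relative interior of the realized face `σ` inside `|∂Δ^{m-1}|`. -/
def relint {m : ℕ} (σ : Finset (Fin m)) : Set (bdSimplex m) :=
  {x | supp x.1 = σ}


/-- If `τ_i ∪ τ_j = [m]`, then the interiors of the realized stars of `τ_i`
and `τ_j` in `∂Δ^{m-1}` are disjoint. -/
theorem ustar_inter_of_union_eq_univ {m : ℕ} (τi τj : Finset (Fin m))
    (hi : τi.Nonempty) (hj : τj.Nonempty) (h : τi ∪ τj = Finset.univ) :
    Ustar τi ∩ Ustar τj = ∅ := by
  ext x
  simp only [Set.mem_inter_iff, Set.mem_empty_iff_false, iff_false]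
  rintro ⟨hxi, hxj⟩
  -- basic facts about x
  have hx0 : ∀ i, 0 ≤ x.1 i := x.2.1.1
  have hxsum : ∑ i, x.1 i = 1 := x.2.1.2
  have hx1 : ∀ i, x.1 i ≤ 1 := by
    intro i
    calc x.1 i ≤ ∑ j, x.1 j := Finset.single_le_sum (fun j _ => hx0 j) (Finset.mem_univ i)
    _ = 1 := hxsum
  -- from membership in realize (starC τi): a zero coordinate k ∉ τi
  obtain ⟨σi, hσi, hsubi⟩ := interior_subset hxi
  obtain ⟨k, hk⟩ : ∃ k, k ∉ σi ∪ τi := by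
    by_contra hc
    push_neg at hc
    exact hσi (Finset.eq_univ_iff_forall.mpr hc)
  rw [Finset.mem_union] at hk
  push_neg at hk
  have hxk : x.1 k = 0 := by
    by_contra hc
    exact hk.1 (hsubi (by simp [supp, hc]))
  have hkτi : k ∉ τi := hk.2
  -- from membership in realize (starC τj): a zero coordinate l ∉ τj
  obtain ⟨σj, hσj, hsubj⟩ := interior_subset hxj
  obtain ⟨l, hl⟩ : ∃ l, l ∉ σj ∪ τj := by
    by_contra hc
    push_neg at hc
    exact hσj (Finset.eq_univ_iff_forall.mpr hc)
  rw [Finset.mem_union] at hl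
  push_neg at hl
  have hxl : x.1 l = 0 := by
    by_contra hc
    exact hl.1 (hsubj (by simp [supp, hc]))
  have hlτj : l ∉ τj := hl.2
  have hlτi : l ∈ τi := by
    have := Finset.mem_univ l
    rw [← h, Finset.mem_union] at this
    tauto
  have hkl : k ≠ l := fun e => hkτi (e ▸ hlτi)
  -- ε-ball around x inside realize (starC τi)
  obtain ⟨ε, hε, hball⟩ := Metric.mem_nhds_iff.mp (mem_interior_iff_mem_nhds.mp hxi)
  -- construct the perturbed point
  set Z : Finset (Fin m) := Finset.univ.filter (fun i => x.1 i = 0) with hZ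
  set S : Finset (Fin m) := Z.erase l with hS
  have hkS : k ∈ S := by
    simp [hS, hZ, hkl, hxk]
  have hn : 0 < S.card := Finset.card_pos.mpr ⟨k, hkS⟩
  set n : ℕ := S.card
  set δ : ℝ := min (ε/2) 2⁻¹ with hδ
  have hδ0 : 0 < δ := lt_min (by linarith) (by norm_num)
  have hδ1 : δ < 1 := lt_of_le_of_lt (min_le_right _ _) (by norm_num)
  have hδε : δ < ε := lt_of_le_of_lt (min_le_left _ _) (by linarith)
  set c : Fin m → ℝ := fun i => if i ∈ S then (n : ℝ)⁻¹ else 0 with hc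
  have hc0 : ∀ i, 0 ≤ c i := by
    intro i
    simp only [hc]
    split <;> positivity
  have hc1 : ∀ i, c i ≤ 1 := by
    intro i
    simp only [hc]
    split
    · rw [inv_le_one_iff₀]
      right
      exact_mod_cast hn
    · norm_num
  have hcsum : ∑ i, c i = 1 := by
    simp only [hc]
    rw [Finset.sum_ite_mem, Finset.univ_inter, Finset.sum_const, nsmul_eq_mul]
    exact mul_inv_cancel₀ (by exact_mod_cast hn.ne')
  set y : Fin m → ℝ := fun i => (1 - δ) * x.1 i + δ * c i with hy
  have hy0 : ∀ i, 0 ≤ y i := by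
    intro i
    have := hx0 i; have := hc0 i
    simp only [hy]
    nlinarith
  have hysum : ∑ i, y i = 1 := by
    simp only [hy]
    rw [Finset.sum_add_distrib, ← Finset.mul_sum, ← Finset.mul_sum, hxsum, hcsum]
    ring
  have hyl : y l = 0 := by
    simp [hy, hxl, hc, hS]
  have hypos : ∀ i, i ≠ l → 0 < y i := by
    intro i hil
    rcases eq_or_lt_of_le (hx0 i) with hz | hp
    · have hiS : i ∈ S := by simp [hS, hZ, hil, ← hz]
      have : c i = (n : ℝ)⁻¹ := by simp [hc, hiS]
      simp only [hy, ← hz, this]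
      have : (0:ℝ) < (n:ℝ)⁻¹ := inv_pos.mpr (by exact_mod_cast hn)
      nlinarith
    · have := hc0 i
      simp only [hy]
      nlinarith
  have hsuppy : supp y = Finset.univ.erase l := by
    ext i
    simp only [supp, Finset.mem_filter, Finset.mem_univ, true_and, Finset.mem_erase, and_true]
    constructor
    · intro hne
      intro e
      exact hne (e ▸ hyl)
    · intro hil
      exact (hypos i hil).ne'
  have hybd : y ∈ bdSimplex m := by
    refine ⟨⟨hy0, hysum⟩, ?_⟩
    rw [hsuppy]
    intro e
    have := Finset.mem_univ l
    rw [← e, Finset.mem_erase] at this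
    exact this.1 rfl
  -- y is within ε of x
  have hdist : dist (⟨y, hybd⟩ : bdSimplex m) x < ε := by
    rw [Subtype.dist_eq]
    refine lt_of_le_of_lt (dist_pi_le_iff hδ0.le |>.mpr ?_) hδε
    intro i
    rw [Real.dist_eq]
    have h1 : y i - x.1 i = δ * (c i - x.1 i) := by simp only [hy]; ring
    rw [h1, abs_mul, abs_of_pos hδ0]
    have : |c i - x.1 i| ≤ 1 := by
      rw [abs_le]
      constructor
      · have := hc0 i; have := hx1 i; linarith
      · have := hc1 i; have := hx0 i; linarith
    nlinarith
  -- contradiction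
  have hymem : (⟨y, hybd⟩ : bdSimplex m) ∈ realize (starC τi) :=
    hball (Metric.mem_ball.mpr hdist)
  obtain ⟨σ, hσ, hsub⟩ := hymem
  apply hσ
  apply Finset.eq_univ_iff_forall.mpr
  intro i
  rw [Finset.mem_union]
  rcases eq_or_ne i l with rfl | hil
  · exact Or.inr hlτi
  · exact Or.inl (hsub (by rw [hsuppy]; simp [hil]))
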